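/- arXiv:0807.1654 — 7 statements merged into one kernel-verified Lean document; each statement's English description precedes it below -/
import Mathlib

section
/- Let R be an F-finite ring of characteristic p > 0 and I ⊆ R a uniformly F-compatible ideal. Suppose that for some e > 0 there is an R-linear map φ : F^e_* R → R with φ(1) = 1 (i.e., R is F-split). Then φ induces a splitting of Frobenius on R/I; in particular R/I is F-pure and I is a radical ideal. -/
/-- An additive map `φ : R → R` viewed as an `R`-linear map `F^e_* R → R` (with `q = p^e`):
it satisfies `φ(r^q · x) = r · φ(x)`. -/
def IsPeLinear (R : Type*) [CommRing R] (q : ℕ) (φ : R → R) : Prop :=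
  (∀ x y : R, φ (x + y) = φ x + φ y) ∧ ∀ r x : R, φ (r ^ q * x) = r * φ x

/-- An ideal `I ⊆ R` is uniformly `F`-compatible if for every `e > 0` and every
`R`-linear map `φ : F^e_* R → R` one has `φ(F^e_* I) ⊆ I`. -/
def UnifFCompat (R : Type*) [CommRing R] (p : ℕ) (I : Ideal R) : Prop :=
  ∀ e : ℕ, 0 < e → ∀ φ : R → R, IsPeLinear R (p ^ e) φ → ∀ x ∈ I, φ x ∈ I

/-- `R` is `F`-finite: `R` is module-finite over itself via the Frobenius. -/
def FFinite (R : Type*) [CommRing R] (p : ℕ) [Fact p.Prime] [CharP R p] : Prop :=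
  RingHom.Finite (frobenius R p)

/-- If `I` is uniformly `F`-compatible and some `R`-linear `φ : F^e_* R → R` sends
`1` to `1` (i.e. `R` is `F`-split), then `φ` induces a Frobenius splitting of `R/I`;
in particular `R/I` is `F`-pure and `I` is radical. -/
theorem quotient_split_of_unifFCompat {R : Type*} [CommRing R] (p : ℕ) [Fact p.Prime]
    [CharP R p] (hFF : FFinite R p) (I : Ideal R) (hI : UnifFCompat R p I)
    (e : ℕ) (he : 0 < e) (φ : R → R) (hφ : IsPeLinear R (p ^ e) φ) (h1 : φ 1 = 1) :
    (∃ ψ : R ⧸ I → R ⧸ I, IsPeLinear (R ⧸ I) (p ^ e) ψ ∧ ψ 1 = 1 ∧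
      ∀ x : R, ψ (Ideal.Quotient.mk I x) = Ideal.Quotient.mk I (φ x)) ∧
    I.IsRadical := by
  have hcompat : ∀ x ∈ I, φ x ∈ I := hI e he φ hφ
  obtain ⟨hadd, hlin⟩ := hφ
  have hsub : ∀ x y : R, φ (x - y) = φ x - φ y := by
    intro x y
    have h := hadd (x - y) y
    rw [sub_add_cancel] at h
    exact (eq_sub_of_add_eq h.symm)
  -- the induced map on the quotient
  have hwd : ∀ a b : R, Ideal.Quotient.mk I a = Ideal.Quotient.mk I b →
      Ideal.Quotient.mk I (φ a) = Ideal.Quotient.mk I (φ b) := by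
    intro a b hab
    rw [Ideal.Quotient.eq] at hab ⊢
    rw [← hsub]
    exact hcompat _ hab
  let ψ : R ⧸ I → R ⧸ I := fun x =>
    Quotient.liftOn' x (fun a => Ideal.Quotient.mk I (φ a)) (by
      intro a b hab
      exact hwd a b (Quotient.sound' hab))
  have hψmk : ∀ x : R, ψ (Ideal.Quotient.mk I x) = Ideal.Quotient.mk I (φ x) :=
    fun x => rfl
  have hsurj : Function.Surjective (Ideal.Quotient.mk I) := Ideal.Quotient.mk_surjective
  refine ⟨⟨ψ, ⟨?_, ?_⟩, ?_, hψmk⟩, ?_⟩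
  · intro x y
    obtain ⟨a, rfl⟩ := hsurj x
    obtain ⟨b, rfl⟩ := hsurj y
    rw [← map_add, hψmk, hψmk, hψmk, hadd, map_add]
  · intro r x
    obtain ⟨a, rfl⟩ := hsurj r
    obtain ⟨b, rfl⟩ := hsurj x
    rw [← map_pow, ← map_mul, hψmk, hψmk, hlin, map_mul]
  · have : (1 : R ⧸ I) = Ideal.Quotient.mk I 1 := rfl
    rw [this, hψmk, h1]
  · -- I is radical
    have hq : 1 < p ^ e := Nat.one_lt_pow he.ne' (Fact.out (p := p.Prime)).one_lt
    rw [Ideal.isRadical_iff_pow_one_lt (p ^ e) hq]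
    intro r hr
    have : φ (r ^ (p ^ e)) = r := by
      have := hlin r 1
      rwa [mul_one, h1, mul_one] at this
    rw [← this]
    exact hcompat _ hr
end

section
/- Let R be an F-finite ring of characteristic p > 0, T ⊆ R a multiplicative set, f : R → T^{-1}R the localization map, and I ⊆ T^{-1}R a uniformly F-compatible ideal. Then f^{-1}(I) is a uniformly F-compatible ideal of R. -/
lemma loc_mk_pow {R : Type*} [CommRing R] {T : Submonoid R} (s : R) (v : T) (n : ℕ) :
    (Localization.mk s v : Localization T) ^ n = Localization.mk (s ^ n) (v ^ n) := by
  induction n with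
  | zero => simp [Localization.mk_one_eq_algebraMap]
  | succ n ih => rw [pow_succ, ih, Localization.mk_mul, pow_succ, pow_succ]

/-- The contraction to `R` of a uniformly `F`-compatible ideal of a localization of an
`F`-finite ring `R` of characteristic `p > 0` is uniformly `F`-compatible. -/
theorem unifFCompat_comap_localization {R : Type*} [CommRing R] (p : ℕ) [Fact p.Prime]
    [CharP R p] (hFF : FFinite R p) (T : Submonoid R) (I : Ideal (Localization T))
    (hI : UnifFCompat (Localization T) p I) :
    UnifFCompat R p (I.comap (algebraMap R (Localization T))) := by
  intro e he φ hφ x hx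
  obtain ⟨hadd, hlin⟩ := hφ
  set q := p ^ e with hqdef
  have hq : q - 1 + 1 = q := Nat.succ_pred_eq_of_pos (pow_pos (Fact.out (p := p.Prime)).pos e)
  have hpow : ∀ t : R, t ^ q = t ^ (q - 1) * t := fun t => by conv_lhs => rw [← hq, pow_succ]
  -- well-definedness of the localized map
  have key : ∀ {a c : R} {b d : T}, Localization.r T (a, b) (c, d) →
      Localization.mk (φ (a * (b : R) ^ (q - 1))) b
        = Localization.mk (φ (c * (d : R) ^ (q - 1))) d := by
    intro a c b d h
    rw [Localization.r_iff_exists] at h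
    obtain ⟨u, hu⟩ := h
    rw [Localization.mk_eq_mk_iff, Localization.r_iff_exists]
    refine ⟨u, ?_⟩
    calc (u : R) * ((d : R) * φ (a * (b : R) ^ (q - 1)))
        = φ ((u : R) ^ (q - 1) * (b : R) ^ (q - 1) * (d : R) ^ (q - 1)
            * ((u : R) * ((d : R) * a))) := by
          rw [← hlin, ← hlin]
          exact congrArg φ (by rw [hpow (u : R), hpow (d : R)]; ring)
      _ = φ ((u : R) ^ (q - 1) * (b : R) ^ (q - 1) * (d : R) ^ (q - 1)
            * ((u : R) * ((b : R) * c))) := by rw [hu]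
      _ = (u : R) * ((b : R) * φ (c * (d : R) ^ (q - 1))) := by
          rw [← hlin, ← hlin]
          exact congrArg φ (by rw [hpow (u : R), hpow (b : R)]; ring)
  set ψ : Localization T → Localization T := fun z =>
    Localization.liftOn z (fun r t => Localization.mk (φ (r * (t : R) ^ (q - 1))) t)
      (fun h => key h) with hψdef
  have hψmk : ∀ (a : R) (b : T),
      ψ (Localization.mk a b) = Localization.mk (φ (a * (b : R) ^ (q - 1))) b :=
    fun a b => rfl
  have hψadd : ∀ z w : Localization T, ψ (z + w) = ψ z + ψ w := by
    intro z w
    induction z using Localization.induction_on with | _ zz => ?_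
    induction w using Localization.induction_on with | _ ww => ?_
    obtain ⟨a, b⟩ := zz
    obtain ⟨c, d⟩ := ww
    rw [Localization.add_mk, hψmk, hψmk, hψmk, Localization.add_mk]
    congr 1
    rw [← hlin, ← hlin, ← hadd]
    exact congrArg φ (by
      rw [Submonoid.coe_mul, hpow (b : R), hpow (d : R)]; ring)
  have hψlin : ∀ Y z : Localization T, ψ (Y ^ q * z) = Y * ψ z := by
    intro Y z
    induction Y using Localization.induction_on with | _ yy => ?_
    induction z using Localization.induction_on with | _ zz => ?_
    obtain ⟨s, v⟩ := yy
    obtain ⟨r, t⟩ := zz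
    rw [loc_mk_pow, Localization.mk_mul, hψmk, hψmk, Localization.mk_mul,
      Localization.mk_eq_mk_iff, Localization.r_iff_exists]
    refine ⟨1, ?_⟩
    have harg : s ^ q * r * ((((v : T) ^ q * t : T) : R)) ^ (q - 1)
        = (s * (v : R) ^ (q - 1)) ^ q * (r * (t : R) ^ (q - 1)) := by
      push_cast
      ring
    rw [harg, hlin]
    push_cast
    rw [hpow (v : R)]
    ring
  have hm : ψ (algebraMap R (Localization T) x) = algebraMap R (Localization T) (φ x) := by
    rw [← Localization.mk_one_eq_algebraMap, ← Localization.mk_one_eq_algebraMap, hψmk]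
    congr 1
    simp
  have := hI e he ψ ⟨hψadd, hψlin⟩ _ hx
  rw [hm] at this
  exact this
end

section
/- Let (R, 𝔪) be an F-finite F-pure reduced local ring, and define the splitting prime 𝒫 to be the set of c ∈ R such that for every e > 0 the R-linear map R → F^e_* R sending 1 to c does not split. Then 𝒫 is the unique largest center of F-purity of R: every uniformly F-compatible prime ideal of R is contained in 𝒫. -/
/-- `R` is `F`-split (`F`-pure): some `R`-linear map `F^e_* R → R` sends `1` to `1`. -/
def FSplit (R : Type*) [CommRing R] (p : ℕ) : Prop :=
  ∃ e : ℕ, 0 < e ∧ ∃ φ : R → R, IsPeLinear R (p ^ e) φ ∧ φ 1 = 1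

open IsLocalRing

/-- Composition of a `q`-linear (inner) and `q'`-linear (outer) map is `q*q'`-linear. -/
private lemma pe_comp {R : Type*} [CommRing R] {q q' : ℕ} {φ ψ : R → R}
    (hφ : IsPeLinear R q φ) (hψ : IsPeLinear R q' ψ) :
    IsPeLinear R (q * q') (fun x => ψ (φ x)) := by
  refine ⟨fun x y => by simp only [hφ.1, hψ.1], fun r x => ?_⟩
  have h1 : r ^ (q * q') = (r ^ q') ^ q := by rw [mul_comm, pow_mul]
  simp only [h1, hφ.2, hψ.2]

private lemma pe_scale {R : Type*} [CommRing R] {q : ℕ} {φ : R → R} (a : R)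
    (hφ : IsPeLinear R q φ) : IsPeLinear R q (fun x => a * φ x) := by
  refine ⟨fun x y => by simp only; rw [hφ.1]; ring,
    fun r x => by simp only; rw [hφ.2]; ring⟩

private lemma pe_premul {R : Type*} [CommRing R] {q : ℕ} {φ : R → R} (a : R)
    (hφ : IsPeLinear R q φ) : IsPeLinear R q (fun x => φ (a * x)) := by
  refine ⟨fun x y => by simp only; rw [mul_add, hφ.1], fun r x => ?_⟩
  simp only
  rw [show a * (r ^ q * x) = r ^ q * (a * x) by ring, hφ.2]

private lemma mem_iff_nonunit {R : Type*} [CommRing R] [IsLocalRing R] (p : ℕ) (c : R) :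
    (∀ e : ℕ, 0 < e → ¬ ∃ φ : R → R, IsPeLinear R (p ^ e) φ ∧ φ c = 1) ↔
    (∀ e : ℕ, 0 < e → ∀ φ : R → R, IsPeLinear R (p ^ e) φ → φ c ∈ maximalIdeal R) := by
  constructor
  · intro h e he φ hφ
    rw [mem_maximalIdeal, mem_nonunits_iff]
    intro hu
    obtain ⟨u, hu⟩ := hu
    exact h e he ⟨fun x => (↑u⁻¹ : R) * φ x, pe_scale _ hφ, by
      simp [← hu, ← mul_assoc]⟩
  · rintro h e he ⟨φ, hφ, h1⟩
    have := h e he φ hφ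
    rw [h1, mem_maximalIdeal, mem_nonunits_iff] at this
    exact this isUnit_one

/-- Aberbach–Enescu's splitting prime: in an `F`-finite `F`-pure reduced local ring
`(R,𝔪)`, the set `𝒫` of `c ∈ R` such that no map `R → F^e_* R`, `1 ↦ c`, splits is the
unique largest center of `F`-purity: it is a uniformly `F`-compatible prime ideal
containing every uniformly `F`-compatible prime ideal of `R`. -/
theorem splittingPrime_largest_center {R : Type*} [CommRing R] [IsLocalRing R] (p : ℕ)
    [Fact p.Prime] [CharP R p] [IsReduced R] (hFF : FFinite R p) (hpure : FSplit R p) :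
    ∃ P : Ideal R,
      (P : Set R) = {c : R | ∀ e : ℕ, 0 < e →
        ¬ ∃ φ : R → R, IsPeLinear R (p ^ e) φ ∧ φ c = 1} ∧
      P.IsPrime ∧ UnifFCompat R p P ∧
      ∀ Q : Ideal R, Q.IsPrime → UnifFCompat R p Q → Q ≤ P := by
  set P : Ideal R :=
    { carrier := {c : R | ∀ e : ℕ, 0 < e → ∀ φ : R → R,
        IsPeLinear R (p ^ e) φ → φ c ∈ maximalIdeal R}
      zero_mem' := by
        intro e he φ hφ
        have h0 : φ 0 = 0 := by
          have := hφ.1 0 0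
          simpa using this
        rw [h0]; exact (maximalIdeal R).zero_mem
      add_mem' := by
        intro a b ha hb e he φ hφ
        rw [hφ.1]
        exact (maximalIdeal R).add_mem (ha e he φ hφ) (hb e he φ hφ)
      smul_mem' := by
        intro r c hc e he φ hφ
        have := hc e he (fun x => φ (r * x)) (pe_premul r hφ)
        simpa using this } with hP
  have memP : ∀ c : R, c ∈ P ↔ ∀ e : ℕ, 0 < e → ∀ φ : R → R,
      IsPeLinear R (p ^ e) φ → φ c ∈ maximalIdeal R := fun _ => Iff.rfl
  -- the "no splitting" characterization: a witness with unit value gives one with value 1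
  have notMem : ∀ c : R, c ∉ P → ∃ e : ℕ, 0 < e ∧ ∃ φ : R → R,
      IsPeLinear R (p ^ e) φ ∧ φ c = 1 := by
    intro c hc
    rw [memP] at hc
    push_neg at hc
    obtain ⟨e, he, φ, hφ, hu⟩ := hc
    rw [mem_maximalIdeal, mem_nonunits_iff, not_not] at hu
    obtain ⟨u, hu⟩ := hu
    exact ⟨e, he, fun x => (↑u⁻¹ : R) * φ x, pe_scale _ hφ, by simp [← hu, ← mul_assoc]⟩
  have hne : P ≠ ⊤ := by
    intro htop
    obtain ⟨e, he, φ, hφ, h1⟩ := hpure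
    have : φ 1 ∈ maximalIdeal R := (memP 1).mp (htop ▸ Submodule.mem_top) e he φ hφ
    rw [h1, mem_maximalIdeal, mem_nonunits_iff] at this
    exact this isUnit_one
  refine ⟨P, ?_, ?_, ?_, ?_⟩
  · ext c
    simpa [memP] using (mem_iff_nonunit p c).symm
  · refine ⟨hne, ?_⟩
    intro a b hab
    by_contra hcon
    push_neg at hcon
    obtain ⟨ha, hb⟩ := hcon
    obtain ⟨e, he, φ, hφ, hφa⟩ := notMem a ha
    obtain ⟨e', he', ψ, hψ, hψb⟩ := notMem b hb
    -- a * b ^ (p^e) ∈ P, but ψ ∘ φ sends it to 1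
    obtain ⟨q', hq'⟩ : ∃ q', p ^ e = q' + 1 :=
      ⟨p ^ e - 1, (Nat.succ_pred_eq_of_pos (pow_pos (Fact.out : p.Prime).pos e)).symm⟩
    have hmem : a * b ^ (p ^ e) ∈ P := by
      have : a * b ^ (p ^ e) = b ^ q' * (a * b) := by rw [hq']; ring
      rw [this]
      exact P.mul_mem_left _ hab
    have hθ : IsPeLinear R (p ^ (e + e')) (fun x => ψ (φ x)) := by
      rw [pow_add]; exact pe_comp hφ hψ
    have hval : ψ (φ (a * b ^ (p ^ e))) = 1 := by
      have : φ (a * b ^ (p ^ e)) = b * φ a := by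
        rw [show a * b ^ (p ^ e) = b ^ (p ^ e) * a by ring, hφ.2]
      rw [this, hφa, mul_one, hψb]
    have := (memP _).mp hmem (e + e') (Nat.add_pos_left he e') _ hθ
    rw [hval, mem_maximalIdeal, mem_nonunits_iff] at this
    exact this isUnit_one
  · -- uniformly F-compatible
    intro e he φ hφ c hc
    rw [memP] at hc ⊢
    intro e' he' ψ hψ
    have hθ : IsPeLinear R (p ^ (e + e')) (fun x => ψ (φ x)) := by
      rw [pow_add]; exact pe_comp hφ hψ
    exact hc (e + e') (Nat.add_pos_left he e') _ hθ
  · intro Q hQ hQcompat c hc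
    by_contra hcP
    obtain ⟨e, he, φ, hφ, h1⟩ := notMem c hcP
    have : φ c ∈ Q := hQcompat e he φ hφ c hc
    rw [h1] at this
    exact hQ.ne_top ((Ideal.eq_top_iff_one Q).mpr this)
end

section
/- Let R be a reduced F-finite ring of characteristic p > 0 with normalization R^N inside its total ring of fractions. Then the conductor ideal I = Ann_R(R^N/R) = {x ∈ R : x R^N ⊆ R} is uniformly F-compatible: for every e > 0 and every R-linear map φ : F^e_* R → R, one has φ(F^e_* I) ⊆ I. -/
/-- The conductor ideal `I = {x ∈ R : x·Rᴺ ⊆ R}` of a reduced `F`-finite ring `R` of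
characteristic `p > 0` in its normalization `Rᴺ` (the integral closure of `R` in its
total ring of fractions) is uniformly `F`-compatible. -/
theorem conductor_unifFCompat {R : Type*} [CommRing R] (p : ℕ) [Fact p.Prime]
    [CharP R p] [IsReduced R] (hFF : FFinite R p) (I : Ideal R)
    (hI : ∀ x : R, x ∈ I ↔ ∀ y ∈ integralClosure R (FractionRing R),
      algebraMap R (FractionRing R) x * y ∈ (algebraMap R (FractionRing R)).range) :
    UnifFCompat R p I := by
  intro e _he φ hφ x hx
  set q := p ^ e with hq
  set K := FractionRing R
  set f := algebraMap R K with hf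
  have hinj : Function.Injective f := IsFractionRing.injective R K
  rw [hI]
  intro y hy
  -- y^q is integral, so x * y^q ∈ R
  obtain ⟨r, hr⟩ := (hI x).1 hx (y ^ q) (pow_mem hy q)
  -- write y = a / s
  obtain ⟨⟨a, s⟩, hys⟩ := IsLocalization.mk'_surjective (nonZeroDivisors R) y
  have hsu : IsUnit (f (s : R)) := IsLocalization.map_units K s
  have hyspec : y * f (s : R) = f a := by
    rw [← hys]; exact IsLocalization.mk'_spec K a s
  -- f (x * a^q) = f (r * s^q)
  have key : x * a ^ q = r * (s : R) ^ q := by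
    apply hinj
    have : f r * f (s : R) ^ q = f x * (y * f (s : R)) ^ q := by
      rw [hr]; ring
    rw [hyspec] at this
    simp only [map_mul, map_pow]
    exact this.symm
  -- apply φ : a * φ x = s * φ r
  have key2 : a * φ x = (s : R) * φ r := by
    have h1 : φ (a ^ q * x) = a * φ x := hφ.2 a x
    have h2 : φ ((s : R) ^ q * r) = (s : R) * φ r := hφ.2 s r
    rw [← h1, ← h2]
    congr 1
    rw [mul_comm (a ^ q) x, mul_comm ((s:R) ^ q) r, key]
  -- conclude: f (φ x) * y = f (φ r)
  refine ⟨φ r, ?_⟩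
  apply hsu.mul_left_cancel
  rw [← map_mul, ← key2, map_mul, ← hyspec]; ring
end

section
/- Let R be an F-finite ring of characteristic p > 0, and let I ⊆ R be a uniformly F-compatible ideal. If P ⊇ I is an ideal whose image P/I in R/I is uniformly F-compatible, then P is uniformly F-compatible in R. -/
lemma IsPeLinear.sub {R : Type*} [CommRing R] {q : ℕ} {φ : R → R}
    (h : IsPeLinear R q φ) (a b : R) : φ (a - b) = φ a - φ b := by
  have h0 : φ 0 = 0 := by
    have := h.1 0 0
    simpa using this
  have hneg : ∀ x : R, φ (-x) = -φ x := by
    intro x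
    have := h.1 x (-x)
    simp only [add_neg_cancel, h0] at this
    exact eq_neg_of_add_eq_zero_right this.symm
  rw [sub_eq_add_neg, h.1, hneg, sub_eq_add_neg]

/-- If `I` is uniformly `F`-compatible in `R` and `P ⊇ I` is an ideal whose image
`P/I` in `R/I` is uniformly `F`-compatible, then `P` is uniformly `F`-compatible
in `R`. -/
theorem unifFCompat_of_quotient {R : Type*} [CommRing R] (p : ℕ) [Fact p.Prime]
    [CharP R p] (hFF : FFinite R p) (I : Ideal R) (hI : UnifFCompat R p I)
    (P : Ideal R) (hIP : I ≤ P)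
    (hPbar : UnifFCompat (R ⧸ I) p (P.map (Ideal.Quotient.mk I))) :
    UnifFCompat R p P := by
  intro e he φ hφ x hx
  have hφI : ∀ y ∈ I, φ y ∈ I := hI e he φ hφ
  -- the induced map on the quotient
  set mk := Ideal.Quotient.mk I with hmk
  have hresp : ∀ a b : R, mk a = mk b → mk (φ a) = mk (φ b) := by
    intro a b hab
    rw [Ideal.Quotient.eq] at hab ⊢
    rw [← hφ.sub]
    exact hφI _ hab
  let ψ : R ⧸ I → R ⧸ I := fun y =>
    Quotient.liftOn y (fun a => mk (φ a)) (fun a b h => by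
      apply hresp
      exact Quotient.sound h)
  have hψmk : ∀ a : R, ψ (mk a) = mk (φ a) := fun a => rfl
  have hsurj : Function.Surjective mk := Ideal.Quotient.mk_surjective
  have hψ : IsPeLinear (R ⧸ I) (p ^ e) ψ := by
    constructor
    · intro u v
      obtain ⟨a, rfl⟩ := hsurj u
      obtain ⟨b, rfl⟩ := hsurj v
      rw [← map_add, hψmk, hψmk, hψmk, hφ.1, map_add]
    · intro r u
      obtain ⟨a, rfl⟩ := hsurj r
      obtain ⟨b, rfl⟩ := hsurj u
      rw [← map_pow, ← map_mul, hψmk, hψmk, hφ.2, map_mul]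
  have hxbar : mk x ∈ P.map mk := Ideal.mem_map_of_mem mk hx
  have := hPbar e he ψ hψ (mk x) hxbar
  rw [hψmk] at this
  have hcomap : (P.map mk).comap mk = P := by
    rw [Ideal.comap_map_of_surjective mk hsurj, ← RingHom.ker_eq_comap_bot, hmk, Ideal.mk_ker, sup_eq_left.mpr hIP]
  rw [← hcomap]
  exact this
end

section
/- Let R be a reduced F-finite ring of characteristic p > 0 and I ⊆ R a uniformly F-compatible ideal. Then the radical √I is also uniformly F-compatible. -/
lemma colon_unifFCompat {R : Type*} [CommRing R] {p : ℕ} (hp : 0 < p) {J : Ideal R}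
    (hJ : UnifFCompat R p J) (s : R) :
    UnifFCompat R p (J.colon (Ideal.span {s})) := by
  intro e he φ hφ t ht
  rw [Ideal.mem_colon_span_singleton] at ht ⊢
  obtain ⟨q', hq'⟩ : ∃ q', p ^ e = q' + 1 :=
    ⟨p ^ e - 1, (Nat.succ_pred_eq_of_pos (pow_pos hp e)).symm⟩
  have h1 : φ t * s = φ (s ^ (q' + 1) * t) := by
    rw [← hq', hφ.2 s t]; ring
  have h2 : s ^ (q' + 1) * t = s ^ q' * (t * s) := by ring
  rw [h1, h2]
  exact hJ e he φ hφ _ (Ideal.mul_mem_left _ _ ht)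

lemma aux_unifFCompat {R : Type*} [CommRing R] {p : ℕ} (hp : 0 < p) :
    ∀ (n : ℕ) (J : Ideal R), UnifFCompat R p J → ∀ x : R, x ^ n ∈ J →
      ∀ e : ℕ, 0 < e → ∀ φ : R → R, IsPeLinear R (p ^ e) φ → φ x ∈ J.radical := by
  intro n
  induction n with
  | zero =>
    intro J hJ x hx e he φ hφ
    have hJtop : J = ⊤ := (Ideal.eq_top_iff_one J).mpr (by simpa using hx)
    exact ⟨0, by simp [hJtop]⟩
  | succ k ih =>
    intro J hJ x hx e he φ hφ
    have hJ1 : UnifFCompat R p (J.colon (Ideal.span {x})) := colon_unifFCompat hp hJ x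
    have hxk : x ^ k ∈ J.colon (Ideal.span {x}) := by
      rw [Ideal.mem_colon_span_singleton, ← pow_succ]; exact hx
    obtain ⟨m, hm⟩ := ih _ hJ1 x hxk e he φ hφ
    rw [Ideal.mem_colon_span_singleton] at hm
    have hJ2 : UnifFCompat R p (J.colon (Ideal.span {φ x ^ m})) :=
      colon_unifFCompat hp hJ (φ x ^ m)
    have hx2 : x ∈ J.colon (Ideal.span {φ x ^ m}) :=
      Ideal.mem_colon_span_singleton.mpr (by rwa [mul_comm])
    have h2 := hJ2 e he φ hφ x hx2
    rw [Ideal.mem_colon_span_singleton] at h2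
    exact ⟨m + 1, by rw [pow_succ, mul_comm]; exact h2⟩

/-- The radical of a uniformly `F`-compatible ideal of a reduced `F`-finite ring of
characteristic `p > 0` is uniformly `F`-compatible. -/
theorem radical_unifFCompat {R : Type*} [CommRing R] (p : ℕ) [Fact p.Prime]
    [CharP R p] [IsReduced R] (hFF : FFinite R p) (I : Ideal R)
    (hI : UnifFCompat R p I) :
    UnifFCompat R p I.radical := by
  intro e he φ hφ x hx
  obtain ⟨n, hn⟩ := hx
  exact aux_unifFCompat (Fact.out : p.Prime).pos n I hI x hn e he φ hφ
end

section
/- Let R be a reduced F-finite ring of characteristic p > 0 and I ⊆ R a radical uniformly F-compatible ideal. Then every minimal prime P of I is uniformly F-compatible (i.e., a center of F-purity). -/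
/-- If `P` is a minimal prime over `I` and `x ∈ P`, then some multiple `s * x ^ n` with
`s ∉ P` lies in `I` (i.e. `x` maps into `√(I R_P) = P R_P` in the localization at `P`). -/
theorem exists_mul_pow_mem_of_mem_minimalPrime {R : Type*} [CommRing R] (I P : Ideal R)
    (hP : P ∈ I.minimalPrimes) {x : R} (hx : x ∈ P) : ∃ s ∉ P, ∃ n : ℕ, s * x ^ n ∈ I := by
  by_contra h
  push_neg at h
  haveI hPp : P.IsPrime := hP.1.1
  set T : Submonoid R :=
    { carrier := {t | ∃ s ∉ P, ∃ n : ℕ, t = s * x ^ n}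
      one_mem' := ⟨1, (P.ne_top_iff_one.mp hPp.ne_top), 0, by ring⟩
      mul_mem' := by
        rintro a b ⟨s, hs, n, rfl⟩ ⟨s', hs', m, rfl⟩
        exact ⟨s * s', fun hm => ((hPp.mul_mem_iff_mem_or_mem.mp hm).elim hs hs'),
          n + m, by ring⟩ } with hT
  have hdisj : Disjoint (I : Set R) (T : Set R) := by
    rw [Set.disjoint_left]
    rintro t ht ⟨s, hs, n, rfl⟩
    exact h s hs n ht
  obtain ⟨Q, hQp, hIQ, hQdisj⟩ := Ideal.exists_le_prime_disjoint I T hdisj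
  have hQP : Q ≤ P := by
    intro y hy
    by_contra hyP
    exact Set.disjoint_left.mp hQdisj hy ⟨y, hyP, 0, by ring⟩
  have hxQ : x ∉ Q := fun hxQ =>
    Set.disjoint_left.mp hQdisj hxQ ⟨1, (P.ne_top_iff_one.mp hPp.ne_top), 1, by ring⟩
  have : P ≤ Q := hP.2 ⟨hQp, hIQ⟩ hQP
  exact hxQ (this hx)

/-- Every minimal prime `P` of a radical uniformly `F`-compatible ideal `I` of a reduced
`F`-finite ring of characteristic `p > 0` is uniformly `F`-compatible (a center of
`F`-purity). -/
theorem minimalPrime_unifFCompat {R : Type*} [CommRing R] (p : ℕ) [Fact p.Prime]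
    [CharP R p] [IsReduced R] (hFF : FFinite R p) (I : Ideal R)
    (hrad : I.radical = I) (hI : UnifFCompat R p I)
    (P : Ideal R) (hP : P ∈ I.minimalPrimes) :
    UnifFCompat R p P := by
  haveI hPp : P.IsPrime := hP.1.1
  have hIP : I ≤ P := hP.1.2
  intro e he φ hφ x hx
  -- find `s ∉ P` with `s * x ^ n ∈ I`
  obtain ⟨s, hs, n, hsn⟩ := exists_mul_pow_mem_of_mem_minimalPrime I P hP hx
  -- upgrade to `s * x ∈ I` using that `I` is radical
  have hsx : s * x ∈ I := by
    rw [← hrad]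
    refine ⟨n + 1, ?_⟩
    have : (s * x) ^ (n + 1) = (s ^ n * x) * (s * x ^ n) := by ring
    rw [this]
    exact I.mul_mem_left _ hsn
  -- then `s ^ (p ^ e) * x ∈ I`
  have hq : s ^ p ^ e * x ∈ I := by
    obtain ⟨k, hk⟩ : ∃ k, p ^ e = k + 1 :=
      ⟨p ^ e - 1, (Nat.succ_pred_eq_of_pos (pow_pos (Fact.out : p.Prime).pos e)).symm⟩
    have : s ^ p ^ e * x = s ^ k * (s * x) := by rw [hk]; ring
    rw [this]
    exact I.mul_mem_left _ hsx
  -- apply uniform F-compatibility of `I`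
  have hmem : s * φ x ∈ I := by
    rw [← hφ.2 s x]
    exact hI e he φ hφ _ hq
  exact ((hPp.mul_mem_iff_mem_or_mem.mp (hIP hmem)).elim (fun h => absurd h hs) id)
end
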